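/- An instance D is admissible for a secrecy view V^s (i.e., the N-answer extension of V^s on D is empty or contains only the all-null tuple) if and only if D classically satisfies the sentence Null-V^s: for all tuples making the body R_1(x̄_1) ∧ ... ∧ R_n(x̄_n) true, either some combination-attribute variable equals null, or all secrecy-attribute (head) variables equal null, or the built-in condition φ fails. -/
import Mathlib

/-- For the join secrecy view `V(x,z) ← P(x,y), R(y,z)` (with `y` the only
relevant variable), the instance is admissible — i.e. the N-extension of the
view is empty or contains only the all-null tuple — iff it classically
satisfies the sentence `Null-V`:
`∀ x y z (P(x,y) ∧ R(y,z) → y = null ∨ (x = null ∧ z = null))`. -/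
theorem stmt6 {U : Type*} (null : U) (P R : Set (U × U)) :
    ({ac : U × U | ∃ b, b ≠ null ∧ (ac.1, b) ∈ P ∧ (b, ac.2) ∈ R}
        ⊆ {((null, null) : U × U)})
      ↔ (∀ x y z : U, (x, y) ∈ P → (y, z) ∈ R → y = null ∨ (x = null ∧ z = null)) := by
  constructor
  · intro h x y z hp hr
    by_cases hy : y = null
    · exact Or.inl hy
    · have := h (show (x, z) ∈ _ from ⟨y, hy, hp, hr⟩)
      simp only [Set.mem_singleton_iff, Prod.mk.injEq] at this
      exact Or.inr this
  · rintro h ⟨a, c⟩ ⟨b, hb, hp, hr⟩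
    rcases h a b c hp hr with h' | ⟨h1, h2⟩
    · exact absurd h' hb
    · simp [h1, h2]
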